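/- With the notation of the previous statement, set Q := 1 − G_max, where G_max := max_{0 ≤ k < N} Re(Z* z_k) and Z is uniform on S¹. Then E[Q²] = 3/2 + (1/(4π)) Σ_{i=0}^{N−1} ( sin Δ_i − 8 sin(Δ_i/2) ), where Δ_i are the angular gaps between consecutive points z_i on the unit circle (summing to 2π). -/
import Mathlib


open MeasureTheory Real

noncomputable section

/-- `G_max(θ) := max_k Re( conj(e^{iθ}) z_k )` where `z_k = e^{i t_k}`. -/
def gmax (N : ℕ) (t : Fin N → ℝ) (θ : ℝ) : ℝ :=
  ⨆ k : Fin N,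
    ((starRingEnd ℂ) (Complex.exp (θ * Complex.I)) * Complex.exp ((t k : ℂ) * Complex.I)).re

/-- Angular gaps `Δ_i := θ_{i+1} − θ_i`, with `θ_N := θ₀ + 2π`. -/
def gap (N : ℕ) (t : Fin N → ℝ) (i : Fin N) : ℝ :=
  (if h : (i : ℕ) + 1 < N then t ⟨(i : ℕ) + 1, h⟩ else t ⟨0, Nat.pos_of_ne_zero (by omega)⟩ + 2 * π) - t i

lemma gmax_eq (N : ℕ) (t : Fin N → ℝ) (θ : ℝ) :
    gmax N t θ = ⨆ k : Fin N, Real.cos (θ - t k) := by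
  unfold gmax
  congr 1; ext k
  rw [← Complex.exp_conj, ← Complex.exp_add]
  have : (starRingEnd ℂ) ((θ:ℂ) * Complex.I) + (t k : ℂ) * Complex.I
      = ((t k - θ : ℝ) : ℂ) * Complex.I := by
    simp [Complex.ext_iff]; ring
  rw [this, Complex.exp_ofReal_mul_I_re, ← Real.cos_neg]
  ring_nf

lemma gap_lt (N : ℕ) (t : Fin N → ℝ) (i : Fin N) (h : (i : ℕ) + 1 < N) :
    gap N t i = t ⟨(i : ℕ) + 1, h⟩ - t i := by
  unfold gap; rw [dif_pos h]

lemma gap_last (N : ℕ) (hN : 0 < N) (t : Fin N → ℝ) (i : Fin N) (h : ¬((i : ℕ) + 1 < N)) :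
    gap N t i = t ⟨0, hN⟩ + 2 * π - t i := by
  unfold gap; rw [dif_neg h]

lemma gap_nonneg (N : ℕ) (t : Fin N → ℝ) (hmono : Monotone t)
    (hrange : ∀ i, t i ∈ Set.Ico (0:ℝ) (2*π)) (i : Fin N) : 0 ≤ gap N t i := by
  have hN : 0 < N := i.pos
  by_cases h : (i : ℕ) + 1 < N
  · rw [gap_lt N t i h]
    have := hmono (show i ≤ ⟨(i:ℕ)+1, h⟩ from Fin.le_def.mpr (by simp))
    linarith
  · rw [gap_last N hN t i h]
    have h1 := (hrange i).2
    have h2 := (hrange ⟨0, hN⟩).1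
    linarith

lemma gap_le_two_pi (N : ℕ) (t : Fin N → ℝ) (hmono : Monotone t)
    (hrange : ∀ i, t i ∈ Set.Ico (0:ℝ) (2*π)) (i : Fin N) : gap N t i ≤ 2*π := by
  have hN : 0 < N := i.pos
  by_cases h : (i : ℕ) + 1 < N
  · rw [gap_lt N t i h]
    have h1 := (hrange ⟨(i:ℕ)+1, h⟩).2
    have h2 := (hrange i).1
    linarith
  · rw [gap_last N hN t i h]
    have := hmono (show (⟨0, hN⟩ : Fin N) ≤ i from Fin.le_def.mpr (Nat.zero_le _))
    linarith

lemma cos_le_max (α β d : ℝ) (hα : 0 ≤ α) (hβ : 0 ≤ β) (h1 : α ≤ d) (h2 : d ≤ 2*π - β) :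
    Real.cos d ≤ max (Real.cos α) (Real.cos β) := by
  rcases le_total d π with hd | hd
  · exact le_max_of_le_left (Real.cos_le_cos_of_nonneg_of_le_pi hα hd h1)
  · have h3 : Real.cos d = Real.cos (2*π - d) := by rw [Real.cos_sub]; simp
    rw [h3]
    refine le_max_of_le_right (Real.cos_le_cos_of_nonneg_of_le_pi hβ ?_ ?_) <;> linarith

lemma gmax_cont (N : ℕ) (hN : 0 < N) (t : Fin N → ℝ) : Continuous (gmax N t) := by
  have : Nonempty (Fin N) := ⟨⟨0, hN⟩⟩
  have h : gmax N t = fun θ =>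
      Finset.univ.sup' Finset.univ_nonempty (fun k : Fin N => Real.cos (θ - t k)) := by
    funext θ; rw [gmax_eq, Finset.sup'_univ_eq_ciSup]
  rw [h]
  exact Continuous.finset_sup'_apply _
    (fun i _ => Real.continuous_cos.comp (continuous_id.sub continuous_const))

lemma gmax_periodic (N : ℕ) (t : Fin N → ℝ) :
    Function.Periodic (fun θ => (1 - gmax N t θ)^2) (2*π) := by
  intro θ
  simp only [gmax_eq]
  congr 2
  exact iSup_congr fun k => by
    rw [show θ + 2*π - t k = (θ - t k) + 2*π by ring, Real.cos_add_two_pi]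

lemma gmax_on_gap (N : ℕ) (hN : 0 < N) (t : Fin N → ℝ) (hmono : Monotone t)
    (hrange : ∀ i, t i ∈ Set.Ico (0:ℝ) (2*π)) (i : Fin N) (θ : ℝ)
    (h1 : t i ≤ θ) (h2 : θ ≤ t i + gap N t i) :
    gmax N t θ = max (Real.cos (θ - t i)) (Real.cos (t i + gap N t i - θ)) := by
  have : Nonempty (Fin N) := ⟨⟨0, hN⟩⟩
  have hbdd : BddAbove (Set.range fun k : Fin N => Real.cos (θ - t k)) :=
    Set.Finite.bddAbove (Set.finite_range _)
  rw [gmax_eq]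
  set b := t i + gap N t i with hbdef
  have ht00 : (0:ℝ) ≤ t ⟨0, hN⟩ := (hrange _).1
  have hti0 : (0:ℝ) ≤ t i := (hrange _).1
  have hble : b ≤ t ⟨0, hN⟩ + 2*π := by
    rw [hbdef]
    by_cases h : (i:ℕ)+1 < N
    · rw [gap_lt N t i h]
      have := (hrange ⟨(i:ℕ)+1, h⟩).2
      linarith
    · rw [gap_last N hN t i h]; linarith
  apply le_antisymm
  · apply ciSup_le
    intro k
    rcases le_or_gt (k:ℕ) (i:ℕ) with hk | hk
    · have hki : t k ≤ t i := hmono (Fin.le_def.mpr hk)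
      have h0k : t ⟨0, hN⟩ ≤ t k := hmono (Fin.le_def.mpr (Nat.zero_le _))
      exact cos_le_max (θ - t i) (b - θ) (θ - t k)
        (by linarith) (by linarith) (by linarith) (by linarith)
    · have hiN : (i:ℕ)+1 < N := by have := k.isLt; omega
      have hbk : b ≤ t k := by
        rw [hbdef, gap_lt N t i hiN, show t i + (t ⟨(i:ℕ)+1, hiN⟩ - t i) = t ⟨(i:ℕ)+1, hiN⟩ by ring]
        exact hmono (Fin.le_def.mpr hk)
      have hk2 := (hrange k).2
      have hcm := cos_le_max (b - θ) (θ - t i) (t k - θ)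
        (by linarith) (by linarith) (by linarith) (by linarith)
      rw [show θ - t k = -(t k - θ) by ring, Real.cos_neg]
      exact hcm.trans_eq (max_comm _ _)
  · apply max_le
    · exact le_ciSup hbdd i
    · by_cases h : (i:ℕ)+1 < N
      · have : Real.cos (b - θ) = Real.cos (θ - t ⟨(i:ℕ)+1, h⟩) := by
          rw [hbdef, gap_lt N t i h, ← Real.cos_neg]
          ring_nf
        rw [this]
        exact le_ciSup hbdd ⟨(i:ℕ)+1, h⟩
      · have : Real.cos (b - θ) = Real.cos (θ - t ⟨0, hN⟩) := by
          rw [hbdef, gap_last N hN t i h,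
            show t i + (t ⟨0, hN⟩ + 2*π - t i) - θ = (t ⟨0, hN⟩ - θ) + 2*π by ring,
            Real.cos_add_two_pi, ← Real.cos_neg]
          ring_nf
        rw [this]
        exact le_ciSup hbdd ⟨0, hN⟩

lemma integral_one_sub_cos (x : ℝ) :
    ∫ ω in (0:ℝ)..x, (1 - Real.cos ω)^2
      = 3/2*x - 2*Real.sin x + Real.sin x * Real.cos x / 2 := by
  have hd : ∀ ω ∈ Set.uIcc (0:ℝ) x,
      HasDerivAt (fun y => 3/2*y - 2*Real.sin y + Real.sin y * Real.cos y / 2)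
        ((1 - Real.cos ω)^2) ω := by
    intro ω _
    have h : HasDerivAt (fun y => 3/2*y - 2*Real.sin y + Real.sin y * Real.cos y / 2)
        ((3/2 * 1 - 2 * Real.cos ω) +
          (Real.cos ω * Real.cos ω + Real.sin ω * -Real.sin ω) / 2) ω :=
      (((hasDerivAt_id ω).const_mul (3/2:ℝ)).sub
        ((Real.hasDerivAt_sin ω).const_mul 2)).add
        (((Real.hasDerivAt_sin ω).mul (Real.hasDerivAt_cos ω)).div_const 2)
    convert h using 1
    nlinarith [Real.sin_sq_add_cos_sq ω]
  rw [intervalIntegral.integral_eq_sub_of_hasDerivAt hd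
    (((continuous_const.sub Real.continuous_cos).pow 2).intervalIntegrable _ _)]
  simp

lemma gap_integral (a b : ℝ) (hab : a ≤ b) (hle : b - a ≤ 2*π) :
    ∫ θ in a..b, (1 - max (Real.cos (θ - a)) (Real.cos (b - θ)))^2
      = 3/2*(b-a) - 4*Real.sin ((b-a)/2) + Real.sin (b-a)/2 := by
  have hπ := Real.pi_pos
  set m := (a+b)/2 with hm
  have ham : a ≤ m := by rw [hm]; linarith
  have hmb : m ≤ b := by rw [hm]; linarith
  have hcont : Continuous fun θ => (1 - max (Real.cos (θ - a)) (Real.cos (b - θ)))^2 := by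
    apply Continuous.pow
    apply continuous_const.sub
    exact (Real.continuous_cos.comp (continuous_id.sub continuous_const)).max
      (Real.continuous_cos.comp (continuous_const.sub continuous_id))
  rw [← intervalIntegral.integral_add_adjacent_intervals
    (hcont.intervalIntegrable a m) (hcont.intervalIntegrable m b)]
  have e1 : ∫ θ in a..m, (1 - max (Real.cos (θ - a)) (Real.cos (b - θ)))^2
      = ∫ θ in a..m, (1 - Real.cos (θ - a))^2 := by
    apply intervalIntegral.integral_congr
    intro θ hθ
    rw [Set.uIcc_of_le ham] at hθ
    have hmax : max (Real.cos (θ - a)) (Real.cos (b - θ)) = Real.cos (θ - a) := by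
      apply max_eq_left
      have := cos_le_max (θ - a) (θ - a) (b - θ) (by linarith [hθ.1]) (by linarith [hθ.1])
        (by rw [hm] at hθ; linarith [hθ.2]) (by linarith [hθ.1])
      simpa using this
    simp only []; rw [hmax]
  have e2 : ∫ θ in m..b, (1 - max (Real.cos (θ - a)) (Real.cos (b - θ)))^2
      = ∫ θ in m..b, (1 - Real.cos (b - θ))^2 := by
    apply intervalIntegral.integral_congr
    intro θ hθ
    rw [Set.uIcc_of_le hmb] at hθ
    have hmax : max (Real.cos (θ - a)) (Real.cos (b - θ)) = Real.cos (b - θ) := by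
      apply max_eq_right
      have := cos_le_max (b - θ) (b - θ) (θ - a) (by linarith [hθ.2]) (by linarith [hθ.2])
        (by rw [hm] at hθ; linarith [hθ.1]) (by linarith [hθ.2])
      simpa using this
    simp only []; rw [hmax]
  rw [e1, e2,
    intervalIntegral.integral_comp_sub_right (fun ω => (1 - Real.cos ω)^2) a,
    intervalIntegral.integral_comp_sub_left (fun ω => (1 - Real.cos ω)^2) b,
    show a - a = (0:ℝ) by ring, show m - a = (b-a)/2 by rw [hm]; ring,
    show b - b = (0:ℝ) by ring, show b - m = (b-a)/2 by rw [hm]; ring,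
    integral_one_sub_cos]
  rw [show b - a = 2*((b-a)/2) by ring, Real.sin_two_mul]
  ring_nf

/-- with `Q := 1 − G_max` and `Z` uniform on `S¹`,
`E[Q²] = 3/2 + (1/(4π)) Σ (sin Δ_i − 8 sin(Δ_i/2))`. -/
theorem stmt11 (N : ℕ) (hN : 0 < N) (t : Fin N → ℝ) (hmono : Monotone t)
    (hrange : ∀ i, t i ∈ Set.Ico (0 : ℝ) (2 * π)) :
    (1 / (2 * π)) * ∫ θ in Set.Ico (0 : ℝ) (2 * π), (1 - gmax N t θ) ^ 2 =
      3 / 2 + (1 / (4 * π)) *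
        ∑ i : Fin N, (Real.sin (gap N t i) - 8 * Real.sin (gap N t i / 2)) := by
  have hπ := Real.pi_pos
  have hcont : Continuous fun θ => (1 - gmax N t θ)^2 :=
    (continuous_const.sub (gmax_cont N hN t)).pow 2
  set u : ℕ → ℝ := fun k => if h : k < N then t ⟨k, h⟩ else t ⟨0, hN⟩ + 2*π with hu
  have hu0 : u 0 = t ⟨0, hN⟩ := dif_pos hN
  have huN : u N = t ⟨0, hN⟩ + 2*π := dif_neg (lt_irrefl N)
  have hut : ∀ i : Fin N, u (i:ℕ) = t i := fun i => dif_pos i.isLt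
  have hustep : ∀ i : Fin N, u ((i:ℕ)+1) = t i + gap N t i := by
    intro i
    by_cases h : (i:ℕ)+1 < N
    · rw [show u ((i:ℕ)+1) = t ⟨(i:ℕ)+1, h⟩ from dif_pos h, gap_lt N t i h]; ring
    · have hiN : (i:ℕ)+1 = N := by have := i.isLt; omega
      rw [show u ((i:ℕ)+1) = t ⟨0, hN⟩ + 2*π by rw [hiN]; exact huN,
        gap_last N hN t i h]
      ring
  -- Step 1: set integral to interval integral
  have step1 : ∫ θ in Set.Ico (0:ℝ) (2*π), (1 - gmax N t θ)^2
      = ∫ θ in (0:ℝ)..(2*π), (1 - gmax N t θ)^2 := by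
    rw [intervalIntegral.integral_of_le (by linarith : (0:ℝ) ≤ 2*π),
      MeasureTheory.integral_Ico_eq_integral_Ioo, MeasureTheory.integral_Ioc_eq_integral_Ioo]
  -- Step 2: shift by periodicity
  have step2 : ∫ θ in (0:ℝ)..(2*π), (1 - gmax N t θ)^2
      = ∫ θ in (u 0)..(u N), (1 - gmax N t θ)^2 := by
    have := (gmax_periodic N t).intervalIntegral_add_eq 0 (u 0)
    simpa [huN, hu0, zero_add] using this
  -- Step 3: split into gaps
  have step3 : ∫ θ in (u 0)..(u N), (1 - gmax N t θ)^2
      = ∑ i : Fin N, (3/2 * gap N t i - 4 * Real.sin (gap N t i / 2) + Real.sin (gap N t i) / 2) := by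
    rw [← intervalIntegral.sum_integral_adjacent_intervals
      (fun k _ => hcont.intervalIntegrable (u k) (u (k+1))),
      ← Fin.sum_univ_eq_sum_range (fun k => ∫ x in u k..u (k+1), (1 - gmax N t x)^2) N]
    apply Finset.sum_congr rfl
    intro i _
    have hΔ0 : 0 ≤ gap N t i := gap_nonneg N t hmono hrange i
    have hΔ2 : gap N t i ≤ 2*π := gap_le_two_pi N t hmono hrange i
    simp only [hut i, hustep i]
    have hcg : ∫ x in (t i)..(t i + gap N t i), (1 - gmax N t x)^2
        = ∫ x in (t i)..(t i + gap N t i),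
            (1 - max (Real.cos (x - t i)) (Real.cos (t i + gap N t i - x)))^2 := by
      apply intervalIntegral.integral_congr
      intro θ hθ
      rw [Set.uIcc_of_le (by linarith)] at hθ
      simp only []
      rw [gmax_on_gap N hN t hmono hrange i θ hθ.1 hθ.2]
    rw [hcg, gap_integral (t i) (t i + gap N t i) (by linarith)
      (by rw [show t i + gap N t i - t i = gap N t i by ring]; exact hΔ2),
      show t i + gap N t i - t i = gap N t i by ring]
  -- telescoping
  have htel : ∑ i : Fin N, gap N t i = 2*π := by
    have h1 : ∀ i : Fin N, gap N t i = u ((i:ℕ)+1) - u (i:ℕ) := fun i => by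
      rw [hustep i, hut i]; ring
    rw [Finset.sum_congr rfl (fun i _ => h1 i),
      Fin.sum_univ_eq_sum_range (fun k => u (k+1) - u k) N,
      Finset.sum_range_sub u N, hu0, huN]
    ring
  rw [step1, step2, step3]
  have split : ∑ i : Fin N, (3/2 * gap N t i - 4 * Real.sin (gap N t i / 2) + Real.sin (gap N t i) / 2)
      = 3/2 * (∑ i : Fin N, gap N t i)
        + (1/2) * ∑ i : Fin N, (Real.sin (gap N t i) - 8 * Real.sin (gap N t i / 2)) := by
    rw [Finset.mul_sum, Finset.mul_sum, ← Finset.sum_add_distrib]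
    exact Finset.sum_congr rfl fun i _ => by ring
  rw [split, htel]
  field_simp
  ring
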